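/- arXiv:2003.00436 — 2 statements merged into one kernel-verified Lean document; each statement's English description precedes it below -/
import Mathlib

section
/- Let f : ℝ^d → ℝ^ℓ be a locally bounded measurable function and let N_f be the (Lebesgue-null) complement of its set of points of approximate continuity. Then for every x̄ ∈ ℝ^d and every δ > 0 it holds: clco f(B_δ(x̄) \ N_f) = ⋂_{N Lebesgue-null} clco f(B_δ(x̄) \ N), where the intersection is taken over all Lebesgue-null sets N ⊆ ℝ^d. -/
open MeasureTheory Metric Filter Set Topology

noncomputable section

/-- `ℝ^n` with the Euclidean structure. -/
abbrev Euc (n : ℕ) : Type := EuclideanSpace ℝ (Fin n)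

/-- Closed convex hull of a set. -/
def clco {n : ℕ} (A : Set (Euc n)) : Set (Euc n) := closure (convexHull ℝ A)

/-- A function is locally bounded. -/
def LocBdd {d l : ℕ} (f : Euc d → Euc l) : Prop :=
  ∀ x : Euc d, ∃ δ > (0 : ℝ), ∃ C : ℝ, ∀ y ∈ Metric.ball x δ, ‖f y‖ ≤ C

/-- The Filippov regularization of `f`. -/
def FilippovReg {d l : ℕ} (f : Euc d → Euc l) (x : Euc d) : Set (Euc l) :=
  ⋂ (N : Set (Euc d)) (_ : volume N = 0) (δ : ℝ) (_ : 0 < δ),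
    clco (f '' (Metric.ball x δ \ N))

/-- The Krasovskii regularization of `f`. -/
def KrasovskiiReg {d l : ℕ} (f : Euc d → Euc l) (x : Euc d) : Set (Euc l) :=
  ⋂ (δ : ℝ) (_ : 0 < δ), clco (f '' Metric.ball x δ)

/-- A set-valued map is cusco: upper semicontinuous with nonempty compact convex values. -/
def IsCusco {d l : ℕ} (Φ : Euc d → Set (Euc l)) : Prop :=
  (∀ x : Euc d, ∀ U : Set (Euc l), IsOpen U → Φ x ⊆ U →
      ∃ δ > (0 : ℝ), ∀ y ∈ Metric.ball x δ, Φ y ⊆ U) ∧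
  ∀ x : Euc d, (Φ x).Nonempty ∧ IsCompact (Φ x) ∧ Convex ℝ (Φ x)

/-- The "minimal" map `m(Φ)` associated to a set-valued map `Φ`. -/
def mPhi {d l : ℕ} (Φ : Euc d → Set (Euc l)) (x : Euc d) : Set (Euc l) :=
  ⋂ (N : Set (Euc d)) (_ : volume N = 0) (δ : ℝ) (_ : 0 < δ),
    clco (⋃ a ∈ Metric.ball x δ \ N, Φ a)

/-- A point of approximate continuity of `f`. -/
def ApproxContAt {d l : ℕ} (f : Euc d → Euc l) (x : Euc d) : Prop :=
  ∀ ε > (0 : ℝ),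
    Tendsto (fun δ : ℝ =>
        volume {y ∈ Metric.ball x δ | ε ≤ ‖f y - f x‖} / volume (Metric.ball x δ))
      (𝓝[>] 0) (𝓝 0)

/-- A cusco map is Filippov representable if it is the Filippov regularization
of some locally bounded measurable function. -/
def FilippovRepresentable {d l : ℕ} (Φ : Euc d → Set (Euc l)) : Prop :=
  ∃ f : Euc d → Euc l, Measurable f ∧ LocBdd f ∧ ∀ x, Φ x = FilippovReg f x


open scoped ENNReal

private lemma locIntegrable_of_locBdd' {d l : ℕ} {f : Euc d → Euc l}
    (hmeas : Measurable f) (hbdd : LocBdd f) : LocallyIntegrable f volume := by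
  intro x
  obtain ⟨r, hr, C, hC⟩ := hbdd x
  refine ⟨Metric.ball x r, Metric.ball_mem_nhds x hr, ?_⟩
  refine Measure.integrableOn_of_bounded (M := C) measure_ball_lt_top.ne
    hmeas.aestronglyMeasurable ?_
  exact (ae_restrict_iff' measurableSet_ball).2 (Filter.Eventually.of_forall hC)

private lemma ae_approxContAt' {d l : ℕ} {f : Euc d → Euc l}
    (hmeas : Measurable f) (hloc : LocallyIntegrable f volume) :
    ∀ᵐ x : Euc d, ApproxContAt f x := by
  rcases Nat.eq_zero_or_pos d with hd | hd
  · subst hd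
    refine Filter.Eventually.of_forall fun x ε hε => ?_
    have hempty : ∀ δ : ℝ, {y ∈ Metric.ball x δ | ε ≤ ‖f y - f x‖} = ∅ := by
      intro δ
      ext y
      have hy : y = x := Subsingleton.elim y x
      simp [hy, hε.not_ge, hε]
    simp only [hempty, measure_empty, ENNReal.zero_div]
    exact tendsto_const_nhds
  · have : Nontrivial (Euc d) := by
      apply Module.nontrivial_of_finrank_pos (R := ℝ)
      simpa using hd
    have h1 := IsUnifLocDoublingMeasure.ae_tendsto_average_norm_sub
      (μ := (volume : Measure (Euc d))) hloc 1
    filter_upwards [h1] with x hx ε hε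
    have havg : Tendsto (fun r : ℝ => ⨍ y in closedBall x r, ‖f y - f x‖) (𝓝[>] (0:ℝ)) (𝓝 0) := by
      refine hx (fun _ => x) id tendsto_id ?_
      filter_upwards [self_mem_nhdsWithin] with r hr
      exact mem_closedBall_self (by simpa using (le_of_lt hr))
    have key : ∀ r : ℝ, 0 < r →
        volume {y ∈ Metric.ball x r | ε ≤ ‖f y - f x‖} / volume (Metric.ball x r)
          ≤ ENNReal.ofReal (⨍ y in closedBall x r, ‖f y - f x‖) / ENNReal.ofReal ε := by
      intro r hr
      set g : Euc d → ENNReal := fun y => ENNReal.ofReal ‖f y - f x‖ with hgdef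
      have hg : Measurable g := ((hmeas.sub measurable_const).norm).ennreal_ofReal
      have markov := mul_meas_ge_le_lintegral₀ (μ := volume.restrict (Metric.ball x r))
        hg.aemeasurable (ENNReal.ofReal ε)
      rw [Measure.restrict_apply (measurableSet_le measurable_const hg)] at markov
      have hset : {y | ENNReal.ofReal ε ≤ g y} ∩ Metric.ball x r
          = {y ∈ Metric.ball x r | ε ≤ ‖f y - f x‖} := by
        ext y
        simp [hgdef, ENNReal.ofReal_le_ofReal_iff (norm_nonneg _), and_comm]
        intro _
        rw [← ofReal_norm, ENNReal.ofReal_le_ofReal_iff (norm_nonneg _)]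
      rw [hset] at markov
      set V := volume (closedBall x r) with hV
      have hVne : V ≠ 0 := (measure_closedBall_pos volume x hr).ne'
      have hVtop : V ≠ ∞ := measure_closedBall_lt_top.ne
      set I := ∫⁻ y in closedBall x r, g y with hI
      have hballI : (∫⁻ y in Metric.ball x r, g y) ≤ I :=
        lintegral_mono_set Metric.ball_subset_closedBall
      have hvol : volume (Metric.ball x r) = V := by
        rw [hV, Measure.addHaar_closedBall_eq_addHaar_ball]
      have hi : IntegrableOn (fun y => ‖f y - f x‖) (closedBall x r) volume := by
        refine Integrable.norm ?_
        exact (hloc.integrableOn_isCompact (isCompact_closedBall x r)).sub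
          (integrableOn_const measure_closedBall_lt_top.ne)
      have hIof : I = ENNReal.ofReal (∫ y in closedBall x r, ‖f y - f x‖) :=
        (ofReal_integral_eq_lintegral_ofReal hi
          (Filter.Eventually.of_forall fun y => norm_nonneg _)).symm
      have havgI : ENNReal.ofReal (⨍ y in closedBall x r, ‖f y - f x‖) = I / V := by
        rw [setAverage_eq, smul_eq_mul, ENNReal.ofReal_mul (by positivity), measureReal_def, ← hV,
          ENNReal.ofReal_inv_of_pos (ENNReal.toReal_pos hVne hVtop),
          ENNReal.ofReal_toReal hVtop, ← hIof, div_eq_mul_inv, mul_comm]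
      rw [havgI, hvol]
      have h1 : volume {y ∈ Metric.ball x r | ε ≤ ‖f y - f x‖} ≤ I / ENNReal.ofReal ε := by
        rw [ENNReal.le_div_iff_mul_le (Or.inl (by simp [hε])) (Or.inl ENNReal.ofReal_ne_top),
          mul_comm]
        exact markov.trans hballI
      calc volume {y ∈ Metric.ball x r | ε ≤ ‖f y - f x‖} / V
          ≤ (I / ENNReal.ofReal ε) / V := ENNReal.div_le_div_right h1 V
        _ = I / V / ENNReal.ofReal ε := by
            simp only [div_eq_mul_inv, mul_right_comm]
    have hupper : Tendsto (fun r : ℝ =>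
        ENNReal.ofReal (⨍ y in closedBall x r, ‖f y - f x‖) / ENNReal.ofReal ε)
        (𝓝[>] (0:ℝ)) (𝓝 0) := by
      have h0 : Tendsto (fun r : ℝ => ENNReal.ofReal (⨍ y in closedBall x r, ‖f y - f x‖))
          (𝓝[>] (0:ℝ)) (𝓝 0) := by
        have := ENNReal.tendsto_ofReal havg
        simpa using this
      simpa [div_eq_mul_inv] using ENNReal.Tendsto.mul_const h0
        (Or.inr (ENNReal.inv_ne_top.2 (by simp [hε])))
    refine tendsto_of_tendsto_of_tendsto_of_le_of_le' tendsto_const_nhds hupper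
      (Filter.Eventually.of_forall fun r => zero_le) ?_
    filter_upwards [self_mem_nhdsWithin] with r hr
    exact key r hr

private lemma mem_closure_image_of_approxContAt' {d l : ℕ} {f : Euc d → Euc l} {x xbar : Euc d}
    {δ : ℝ} (hx : ApproxContAt f x) (hxmem : x ∈ Metric.ball xbar δ)
    {N : Set (Euc d)} (hN : volume N = 0) :
    f x ∈ closure (f '' (Metric.ball xbar δ \ N)) := by
  rw [Metric.mem_closure_iff]
  intro ε hε
  obtain ⟨r, hr, hrsub⟩ : ∃ r > 0, Metric.ball x r ⊆ Metric.ball xbar δ :=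
    Metric.mem_nhds_iff.1 (Metric.isOpen_ball.mem_nhds hxmem)
  have h1 : ∀ᶠ t in 𝓝[>] (0:ℝ),
      volume {y ∈ Metric.ball x t | ε ≤ ‖f y - f x‖} / volume (Metric.ball x t) < 1 :=
    (hx ε hε).eventually_lt_const (by norm_num)
  have h2 : ∀ᶠ t in 𝓝[>] (0:ℝ), t < r :=
    eventually_nhdsWithin_of_eventually_nhds (Filter.Tendsto.eventually_lt_const hr tendsto_id)
  obtain ⟨t, hlt, htr, ht0⟩ := (h1.and (h2.and self_mem_nhdsWithin)).exists
  replace ht0 : (0:ℝ) < t := ht0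
  set B := Metric.ball x t with hB
  set bad := {y ∈ B | ε ≤ ‖f y - f x‖} with hbad
  have hBpos : 0 < volume B := measure_ball_pos volume x ht0
  have hBtop : volume B ≠ ∞ := measure_ball_lt_top.ne
  have hbadlt : volume bad < volume B := by
    have := (ENNReal.div_lt_iff (Or.inl hBpos.ne') (Or.inl hBtop)).1 hlt
    simpa using this
  have hgood : 0 < volume ((B \ bad) \ N) := by
    rw [measure_diff_null hN]
    by_contra h
    push_neg at h
    have h0 : volume (B \ bad) = 0 := le_antisymm h zero_le
    have : volume B ≤ volume bad + volume (B \ bad) := by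
      refine le_trans (measure_mono fun y hy => ?_) (measure_union_le bad (B \ bad))
      by_cases hgood : ε ≤ ‖f y - f x‖
      · exact Or.inl ⟨hy, hgood⟩
      · exact Or.inr ⟨hy, fun hc => hgood hc.2⟩
    rw [h0, add_zero] at this
    exact absurd this hbadlt.not_ge
  obtain ⟨y, hy⟩ := nonempty_of_measure_ne_zero hgood.ne'
  refine ⟨f y, ⟨y, ⟨hrsub (Metric.ball_subset_ball htr.le hy.1.1), hy.2⟩, rfl⟩, ?_⟩
  have : ¬ ε ≤ ‖f y - f x‖ := fun hc => hy.1.2 ⟨hy.1.1, hc⟩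
  rw [dist_eq_norm, norm_sub_rev]
  linarith

/-- Lemma 1, second part: the closed convex hull of the image of a ball minus
`N_f` equals the intersection, over all Lebesgue-null sets `N`, of the closed convex hulls of
the images of the ball minus `N`. -/
theorem filippov_lemma1_intersection (d l : ℕ) (f : Euc d → Euc l)
    (hmeas : Measurable f) (hbdd : LocBdd f)
    (Nf : Set (Euc d)) (hNf : Nf = {x : Euc d | ¬ ApproxContAt f x})
    (xbar : Euc d) (δ : ℝ) (hδ : 0 < δ) :
    clco (f '' (Metric.ball xbar δ \ Nf)) =
      ⋂ (N : Set (Euc d)) (_ : volume N = 0), clco (f '' (Metric.ball xbar δ \ N)) := by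
  apply Set.Subset.antisymm
  · refine subset_iInter₂ fun N hN => ?_
    have hsub : f '' (Metric.ball xbar δ \ Nf)
        ⊆ closure (convexHull ℝ (f '' (Metric.ball xbar δ \ N))) := by
      rintro _ ⟨x, ⟨hxball, hxNf⟩, rfl⟩
      have hx : ApproxContAt f x := by
        rw [hNf] at hxNf
        simpa using hxNf
      exact closure_mono (subset_convexHull ℝ _)
        (mem_closure_image_of_approxContAt' hx hxball hN)
    exact closure_minimal
      (convexHull_min hsub ((convex_convexHull ℝ _).closure)) isClosed_closure
  · have hNf0 : volume Nf = 0 := by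
      rw [hNf]
      exact ae_approxContAt' hmeas (locIntegrable_of_locBdd' hmeas hbdd)
    exact iInter₂_subset Nf hNf0
end
end

section
/- Let Φ : ℝ^d ⇒ ℝ^ℓ be a cusco map. Then for every x ∈ ℝ^d, m(Φ)(x) = ⋂_{Φ' ∼ Φ} Φ'(x), where the intersection is taken over all cusco maps Φ' : ℝ^d ⇒ ℝ^ℓ that are equal to Φ Lebesgue-almost everywhere; consequently Φ(x) = ⋂_{Φ' ∼ Φ} Φ'(x) for Lebesgue-almost every x ∈ ℝ^d. -/
open MeasureTheory Metric Filter Set Topology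

noncomputable section

section Aux

variable {d l : ℕ}

lemma clco_mono {A B : Set (Euc l)} (h : A ⊆ B) : clco A ⊆ clco B :=
  closure_mono (convexHull_mono h)

lemma subset_clco (A : Set (Euc l)) : A ⊆ clco A :=
  (subset_convexHull ℝ A).trans subset_closure

lemma convex_clco (A : Set (Euc l)) : Convex ℝ (clco A) := (convex_convexHull ℝ A).closure

lemma isClosed_clco (A : Set (Euc l)) : IsClosed (clco A) := isClosed_closure

lemma clco_subset_closure {A U : Set (Euc l)} (hU : Convex ℝ U) (h : A ⊆ U) :
    clco A ⊆ closure U := closure_mono (convexHull_min h hU)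

lemma mem_mPhi {Φ : Euc d → Set (Euc l)} {x : Euc d} {z : Euc l} :
    z ∈ mPhi Φ x ↔ ∀ N : Set (Euc d), volume N = 0 → ∀ δ : ℝ, 0 < δ →
      z ∈ clco (⋃ a ∈ Metric.ball x δ \ N, Φ a) := by
  simp only [mPhi, mem_iInter]

/-- Key step 1: `mPhi Φ x` is contained in `Φ' x` for every cusco `Φ'` a.e.-equal to `Φ`. -/
lemma mPhi_subset_of_ae {Φ Φ' : Euc d → Set (Euc l)} (hΦ' : IsCusco Φ')
    (hae : ∀ᵐ y : Euc d, Φ' y = Φ y) (x : Euc d) : mPhi Φ x ⊆ Φ' x := by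
  intro z hz
  have hN : volume {y : Euc d | ¬ Φ' y = Φ y} = 0 := hae
  obtain ⟨hne, hcpt, hconv⟩ := hΦ'.2 x
  have hclosed : IsClosed (Φ' x) := hcpt.isClosed
  have key : ∀ ε : ℝ, 0 < ε → z ∈ cthickening ε (Φ' x) := by
    intro ε hε
    have hUo : IsOpen (thickening ε (Φ' x)) := isOpen_thickening
    have hUc : Convex ℝ (thickening ε (Φ' x)) := hconv.thickening ε
    obtain ⟨δ, hδ, hδU⟩ := hΦ'.1 x _ hUo (self_subset_thickening hε _)
    have hz' := mem_mPhi.1 hz {y | ¬ Φ' y = Φ y} hN δ hδ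
    have hsub : (⋃ a ∈ Metric.ball x δ \ {y | ¬ Φ' y = Φ y}, Φ a) ⊆ thickening ε (Φ' x) := by
      refine iUnion₂_subset fun a ha => ?_
      have : Φ a = Φ' a := by
        have := ha.2; simp only [mem_setOf_eq, not_not] at this; exact this.symm
      rw [this]
      exact hδU a ha.1
    exact (clco_subset_closure hUc hsub).trans (closure_thickening_subset_cthickening ε _) hz'
  rw [← hclosed.closure_eq, Metric.closure_eq_iInter_cthickening]
  exact mem_iInter₂.2 fun ε hε => key ε hε

lemma mPhi_subset_self {Φ : Euc d → Set (Euc l)} (hΦ : IsCusco Φ) (x : Euc d) :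
    mPhi Φ x ⊆ Φ x :=
  mPhi_subset_of_ae hΦ (Eventually.of_forall fun _ => rfl) x

end Aux

section Cusco

variable {d l : ℕ}

lemma cusco_bound {Φ : Euc d → Set (Euc l)} (hΦ : IsCusco Φ) (x : Euc d) :
    ∃ δ1 > (0:ℝ), ∃ R : ℝ, ∀ y ∈ Metric.ball x δ1, Φ y ⊆ Metric.closedBall 0 R := by
  obtain ⟨hne, hcpt, -⟩ := hΦ.2 x
  obtain ⟨R, hR⟩ := hcpt.isBounded.subset_ball (0 : Euc l)
  obtain ⟨δ1, hδ1, h⟩ := hΦ.1 x (Metric.ball 0 R) isOpen_ball hR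
  exact ⟨δ1, hδ1, R, fun y hy => (h y hy).trans ball_subset_closedBall⟩

lemma mPhi_props {Φ : Euc d → Set (Euc l)} (hΦ : IsCusco Φ) (x : Euc d) :
    (mPhi Φ x).Nonempty ∧ IsCompact (mPhi Φ x) ∧
    ∀ U : Set (Euc l), IsOpen U → mPhi Φ x ⊆ U →
      ∃ N : Set (Euc d), volume N = 0 ∧ ∃ δ > (0:ℝ),
        clco (⋃ a ∈ Metric.ball x δ \ N, Φ a) ⊆ U := by
  obtain ⟨δ1, hδ1, R, hR⟩ := cusco_bound hΦ x
  haveI : Nonempty {p : Set (Euc d) × ℝ // volume p.1 = 0 ∧ 0 < p.2 ∧ p.2 ≤ δ1} :=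
    ⟨⟨(∅, δ1), by simp, hδ1, le_refl _⟩⟩
  set t : {p : Set (Euc d) × ℝ // volume p.1 = 0 ∧ 0 < p.2 ∧ p.2 ≤ δ1} → Set (Euc l) :=
    fun p => clco (⋃ a ∈ Metric.ball x p.1.2 \ p.1.1, Φ a) with ht
  have hmono : ∀ (N N' : Set (Euc d)) (δ δ' : ℝ), N ⊆ N' → δ' ≤ δ →
      clco (⋃ a ∈ Metric.ball x δ' \ N', Φ a) ⊆ clco (⋃ a ∈ Metric.ball x δ \ N, Φ a) := by
    intro N N' δ δ' hN hδ
    refine clco_mono (iUnion₂_subset fun a ha => ?_)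
    exact subset_iUnion₂ (s := fun a _ => Φ a) a
      ⟨ball_subset_ball hδ ha.1, fun h => ha.2 (hN h)⟩
  have heq : mPhi Φ x = ⋂ p, t p := by
    apply Set.Subset.antisymm
    · exact subset_iInter fun p => fun z hz => mem_mPhi.1 hz p.1.1 p.2.1 p.1.2 p.2.2.1
    · intro z hz
      rw [mem_mPhi]
      intro N hN δ hδ
      have hz' := mem_iInter.1 hz ⟨(N, min δ δ1), hN, lt_min hδ hδ1, min_le_right _ _⟩
      exact hmono N N δ (min δ δ1) (Set.Subset.refl N) (min_le_left _ _) hz'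
  have hcomp : ∀ p, IsCompact (t p) := by
    intro p
    have hsub0 : (⋃ a ∈ Metric.ball x p.1.2 \ p.1.1, Φ a) ⊆ Metric.closedBall 0 R :=
      iUnion₂_subset fun a ha => hR a (ball_subset_ball p.2.2.2 ha.1)
    have hsub : t p ⊆ Metric.closedBall (0 : Euc l) R := by
      refine (clco_subset_closure (convex_closedBall _ _) hsub0).trans ?_
      rw [IsClosed.closure_eq Metric.isClosed_closedBall]
    exact (isCompact_closedBall _ _).of_isClosed_subset (isClosed_clco _) hsub
  have hne : ∀ p, (t p).Nonempty := by
    intro p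
    have hball : (Metric.ball x p.1.2 \ p.1.1).Nonempty := by
      by_contra h
      rw [Set.not_nonempty_iff_eq_empty, diff_eq_empty] at h
      exact absurd (measure_mono_null h p.2.1) (measure_ball_pos volume x p.2.2.1).ne'
    obtain ⟨a, ha⟩ := hball
    obtain ⟨w, hw⟩ := (hΦ.2 a).1
    exact ⟨w, subset_clco _ (mem_biUnion ha hw)⟩
  have hdir : Directed (· ⊇ ·) t := by
    intro p q
    refine ⟨⟨(p.1.1 ∪ q.1.1, min p.1.2 q.1.2), measure_union_null p.2.1 q.2.1,
      lt_min p.2.2.1 q.2.2.1, (min_le_left _ _).trans p.2.2.2⟩, ?_, ?_⟩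
    · exact hmono _ _ _ _ subset_union_left (min_le_left _ _)
    · exact hmono _ _ _ _ subset_union_right (min_le_right _ _)
  have hcl : ∀ p, IsClosed (t p) := fun p => isClosed_clco _
  refine ⟨?_, ?_, ?_⟩
  · rw [heq]
    exact IsCompact.nonempty_iInter_of_directed_nonempty_isCompact_isClosed t hdir hne hcomp hcl
  · rw [heq]
    exact (hcomp Classical.ofNonempty).of_isClosed_subset (isClosed_iInter hcl)
      (iInter_subset t _)
  · intro U hU hsubU
    have hs : IsCompact (t Classical.ofNonempty ∩ Uᶜ) :=
      (hcomp _).inter_right hU.isClosed_compl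
    have h0 : (t Classical.ofNonempty ∩ Uᶜ) ∩ ⋂ p, t p = ∅ := by
      rw [eq_empty_iff_forall_notMem]
      rintro z ⟨⟨-, hzU⟩, hz⟩
      exact hzU (hsubU (heq ▸ hz))
    obtain ⟨p, hp⟩ := hs.elim_directed_family_closed t hcl h0 hdir
    obtain ⟨r, hr1, hr2⟩ := hdir Classical.ofNonempty p
    refine ⟨r.1.1, r.2.1, r.1.2, r.2.2.1, ?_⟩
    intro z hz
    by_contra hzU
    have hmem : z ∈ (t Classical.ofNonempty ∩ Uᶜ) ∩ t p := ⟨⟨hr1 hz, hzU⟩, hr2 hz⟩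
    rw [hp] at hmem
    exact hmem

lemma mPhi_isCusco {Φ : Euc d → Set (Euc l)} (hΦ : IsCusco Φ) : IsCusco (mPhi Φ) := by
  constructor
  · intro x U hU hsub
    obtain ⟨-, -, h3⟩ := mPhi_props hΦ x
    obtain ⟨N, hN, δ, hδ, hKU⟩ := h3 U hU hsub
    refine ⟨δ/2, by linarith, fun y hy => ?_⟩
    have h1 : mPhi Φ y ⊆ clco (⋃ a ∈ Metric.ball y (δ/2) \ N, Φ a) :=
      fun z hz => mem_mPhi.1 hz N hN (δ/2) (by linarith)
    refine h1.trans ((clco_mono ?_).trans hKU)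
    refine iUnion₂_subset fun a ha => subset_iUnion₂ (s := fun a _ => Φ a) a ⟨?_, ha.2⟩
    have hyx : dist y x < δ/2 := mem_ball.1 hy
    exact ball_subset_ball' (by linarith) ha.1
  · intro x
    obtain ⟨h1, h2, -⟩ := mPhi_props hΦ x
    exact ⟨h1, h2, convex_iInter fun N => convex_iInter fun _ => convex_iInter fun δ =>
      convex_iInter fun _ => convex_clco _⟩

end Cusco

section AE

variable {d l : ℕ}

open scoped RealInnerProductSpace

lemma ae_subset_mPhi {Φ : Euc d → Set (Euc l)} (hΦ : IsCusco Φ) :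
    ∀ᵐ x : Euc d, Φ x ⊆ mPhi Φ x := by
  obtain ⟨s, hs_count, hs_dense⟩ := TopologicalSpace.exists_countable_dense (Euc l)
  set A : Euc l → ℝ → Set (Euc d) := fun v q => {x | ∃ z ∈ Φ x, q < ⟪v, z⟫} with hA
  set B : Euc l → ℝ → Set (Euc d) :=
    fun v q => {x ∈ A v q | ∃ δ > (0:ℝ), volume (A v q ∩ Metric.ball x δ) = 0} with hB
  have hBnull : ∀ v q, volume (B v q) = 0 := by
    intro v q
    apply measure_null_of_locally_null
    rintro x ⟨hxA, δ, hδ, hμ⟩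
    refine ⟨A v q ∩ Metric.ball x δ, ?_, hμ⟩
    rw [mem_nhdsWithin]
    exact ⟨Metric.ball x δ, isOpen_ball, mem_ball_self hδ,
      fun y hy => ⟨hy.2.1, hy.1⟩⟩
  set T : Set (Euc d) := ⋃ v ∈ s, ⋃ q : ℚ, B v (q : ℝ) with hT
  have hTnull : volume T = 0 := by
    refine (measure_biUnion_null_iff hs_count).2 fun v _ => ?_
    exact measure_iUnion_null fun q => hBnull v (q : ℝ)
  rw [ae_iff]
  refine measure_mono_null ?_ hTnull
  intro x hx
  simp only [mem_setOf_eq] at hx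
  rw [Set.not_subset] at hx
  obtain ⟨z, hzΦ, hzm⟩ := hx
  -- z ∈ Φ x, z ∉ mPhi Φ x : produce v, q with x ∈ B v q
  rw [mem_mPhi] at hzm
  push_neg at hzm
  obtain ⟨N, hN, δ0, hδ0, hzK0⟩ := hzm
  obtain ⟨δ1, hδ1, R, hR⟩ := cusco_bound hΦ x
  set δ := min δ0 δ1 with hδdef
  have hδ : 0 < δ := lt_min hδ0 hδ1
  set K := clco (⋃ a ∈ Metric.ball x δ \ N, Φ a) with hK
  have hzK : z ∉ K := by
    intro h
    apply hzK0
    refine clco_mono (iUnion₂_subset fun a ha => subset_iUnion₂ (s := fun a _ => Φ a) a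
      ⟨ball_subset_ball (min_le_left _ _) ha.1, ha.2⟩) h
  -- K is compact nonempty convex closed
  have hKsub : K ⊆ Metric.closedBall (0 : Euc l) R := by
    have hsub0 : (⋃ a ∈ Metric.ball x δ \ N, Φ a) ⊆ Metric.closedBall 0 R :=
      iUnion₂_subset fun a ha => hR a (ball_subset_ball (min_le_right _ _) ha.1)
    refine (clco_subset_closure (convex_closedBall _ _) hsub0).trans ?_
    rw [IsClosed.closure_eq Metric.isClosed_closedBall]
  have hKcomp : IsCompact K :=
    (isCompact_closedBall _ _).of_isClosed_subset (isClosed_clco _) hKsub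
  have hKne : K.Nonempty := by
    have hball : (Metric.ball x δ \ N).Nonempty := by
      by_contra h
      rw [Set.not_nonempty_iff_eq_empty, diff_eq_empty] at h
      exact absurd (measure_mono_null h hN) (measure_ball_pos volume x hδ).ne'
    obtain ⟨a, ha⟩ := hball
    obtain ⟨w, hw⟩ := (hΦ.2 a).1
    exact ⟨w, subset_clco _ (mem_biUnion ha hw)⟩
  obtain ⟨f, u, hfK, hfz⟩ := geometric_hahn_banach_closed_point (convex_clco _)
    (isClosed_clco _) hzK
  obtain ⟨a0, ha0K, ha0max⟩ := hKcomp.exists_isMaxOn hKne f.continuous.continuousOn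
  have hc : f a0 < u := hfK a0 ha0K
  set v0 : Euc l := (InnerProductSpace.toDual ℝ (Euc l)).symm f with hv0
  have hfv0 : ∀ w : Euc l, ⟪v0, w⟫ = f w := fun w => InnerProductSpace.toDual_symm_apply
  set M : ℝ := max R ‖z‖ with hM
  have hM0 : 0 ≤ M := le_max_of_le_right (norm_nonneg _)
  set η : ℝ := min (u - f a0) (f z - u) with hη
  have hη0 : 0 < η := lt_min (by linarith) (by linarith)
  set ε : ℝ := η / (2 * (M + 1)) with hε
  have hε0 : 0 < ε := div_pos hη0 (by linarith)
  obtain ⟨v, hvs, hvd⟩ := hs_dense.exists_dist_lt v0 hε0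
  have hpert : ∀ w : Euc l, ‖w‖ ≤ M → |⟪v, w⟫ - f w| ≤ η / 2 := by
    intro w hw
    have h1 : ⟪v, w⟫ - f w = ⟪v - v0, w⟫ := by
      rw [inner_sub_left, hfv0 w]
    rw [h1]
    have h2 : |⟪v - v0, w⟫| ≤ ‖v - v0‖ * ‖w‖ := abs_real_inner_le_norm _ _
    have h3 : ‖v - v0‖ ≤ ε := by
      have := hvd
      rw [dist_comm, dist_eq_norm] at this
      have h4 : ‖v - v0‖ = ‖v0 - v‖ := by rw [norm_sub_rev]
      linarith [this, h4 ▸ this]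
    have h5 : ‖v - v0‖ * ‖w‖ ≤ ε * (M + 1) := by
      apply mul_le_mul h3 (by linarith) (norm_nonneg _) (le_of_lt hε0)
    have h6 : ε * (M + 1) = η / 2 := by
      rw [hε]; field_simp
    linarith
  have hKbound : ∀ w ∈ K, ⟪v, w⟫ < (f a0 + u) / 2 + η / 2 := by
    intro w hw
    have h1 : ‖w‖ ≤ M := le_max_of_le_left (mem_closedBall_zero_iff.1 (hKsub hw))
    have h2 := hpert w h1
    have h3 : f w ≤ f a0 := ha0max hw
    have h4 : ⟪v, w⟫ ≤ f w + η / 2 := by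
      have := abs_le.1 h2; linarith [this.2]
    have h5 : η ≤ u - f a0 := min_le_left _ _
    linarith
  have hzbound : u < ⟪v, z⟫ := by
    have h1 : ‖z‖ ≤ M := le_max_of_le_right (le_refl _)
    have h2 := hpert z h1
    have h4 : f z - η / 2 ≤ ⟪v, z⟫ := by
      have := abs_le.1 h2; linarith [this.1]
    have h5 : η ≤ f z - u := min_le_right _ _
    linarith
  have hsup : ∀ w ∈ K, ⟪v, w⟫ < u := by
    intro w hw
    have h5 : η ≤ u - f a0 := min_le_left _ _
    have := hKbound w hw
    linarith
  obtain ⟨q, hq1, hq2⟩ := exists_rat_btwn hzbound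
  -- x belongs to B v q
  have hxA : x ∈ A v (q : ℝ) := ⟨z, hzΦ, hq2⟩
  have hAN : A v (q : ℝ) ∩ Metric.ball x δ ⊆ N := by
    rintro y ⟨⟨w, hwΦ, hqw⟩, hyb⟩
    by_contra hyN
    have hwK : w ∈ K := subset_clco _ (mem_biUnion ⟨hyb, hyN⟩ hwΦ)
    have := hsup w hwK
    linarith
  have hxB : x ∈ B v (q : ℝ) :=
    ⟨hxA, δ, hδ, measure_mono_null hAN hN⟩
  exact mem_biUnion hvs (mem_iUnion.2 ⟨q, hxB⟩)

end AE

/-- Remark: `m(Φ)` is the intersection of all cusco maps equivalent to `Φ`,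
and consequently `Φ` coincides almost everywhere with this intersection. -/
theorem mPhi_eq_iInter_equiv (d l : ℕ) (Φ : Euc d → Set (Euc l)) (hΦ : IsCusco Φ) :
    (∀ x : Euc d, mPhi Φ x =
      ⋂ (Φ' : Euc d → Set (Euc l)) (_ : IsCusco Φ') (_ : ∀ᵐ y : Euc d, Φ' y = Φ y), Φ' x) ∧
    (∀ᵐ x : Euc d, Φ x =
      ⋂ (Φ' : Euc d → Set (Euc l)) (_ : IsCusco Φ') (_ : ∀ᵐ y : Euc d, Φ' y = Φ y), Φ' x) := by
  have hae_eq : ∀ᵐ y : Euc d, mPhi Φ y = Φ y := by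
    filter_upwards [ae_subset_mPhi hΦ] with y hy
    exact Set.Subset.antisymm (mPhi_subset_self hΦ y) hy
  have hfirst : ∀ x : Euc d, mPhi Φ x =
      ⋂ (Φ' : Euc d → Set (Euc l)) (_ : IsCusco Φ') (_ : ∀ᵐ y : Euc d, Φ' y = Φ y), Φ' x := by
    intro x
    apply Set.Subset.antisymm
    · exact subset_iInter fun Φ' => subset_iInter fun hΦ' => subset_iInter fun hae =>
        mPhi_subset_of_ae hΦ' hae x
    · intro z hz
      exact mem_iInter.1 (mem_iInter.1 (mem_iInter.1 hz (mPhi Φ)) (mPhi_isCusco hΦ)) hae_eq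
  refine ⟨hfirst, ?_⟩
  filter_upwards [hae_eq] with x hx
  rw [← hfirst x]
  exact hx.symm
end
end
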